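/- Let z ∈ ℝ^{2^V} be a point of the t-th level SoS lift of K_G = {x ∈ [0,1]^V : x_i + x_j ≤ 1 for all edges (i,j)} with t ≥ α(G). Then the projection of z onto singleton coordinates is a convex combination of (indicator vectors of) independent sets of G; in particular max{Σ_i w_i z_i : z ∈ SoS_t(K_G)} equals the maximum weight of an independent set. -/

import Mathlib

open Finset

variable {V : Type*}

/-- `s` is an independent set of `G`. -/
def IsIndep (G : SimpleGraph V) (s : Finset V) : Prop :=
  ∀ u ∈ s, ∀ w ∈ s, u ≠ w → ¬ G.Adj u w

/-- The independence number `α(G)`. -/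
noncomputable def indepNum [Fintype V] (G : SimpleGraph V) : ℕ :=
  sSup {n | ∃ s : Finset V, s.card = n ∧ IsIndep G s}

/-- `z` lies in the level-`t` sum-of-squares lift `SoS_t(K_G)` of the edge polytope
`K_G = {x ∈ [0,1]^V : x_i + x_j ≤ 1 ∀ (i,j) ∈ E}`: the moment matrix and all edge
moment matrices (indexed by sets of size at most `t`) are positive semidefinite,
and `z_∅ = 1`. -/
def InSoS [Fintype V] [DecidableEq V] (G : SimpleGraph V) (t : ℕ)
    (z : Finset V → ℝ) : Prop :=
  z ∅ = 1 ∧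
  (Matrix.PosSemidef
    (Matrix.of fun (I J : {I : Finset V // I.card ≤ t}) => z (I.1 ∪ J.1))) ∧
  ∀ i j : V, G.Adj i j →
    Matrix.PosSemidef
      (Matrix.of fun (I J : {I : Finset V // I.card ≤ t}) =>
        z (I.1 ∪ J.1) - z (I.1 ∪ J.1 ∪ {i}) - z (I.1 ∪ J.1 ∪ {j}))

/-! ### Auxiliary lemmas -/

private lemma quadform_nonneg {n : Type*} [Fintype n] {M : Matrix n n ℝ}
    (h : M.PosSemidef) (x : n → ℝ) :
    0 ≤ ∑ I, ∑ J, x I * M I J * x J := by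
  have H := h.dotProduct_mulVec_nonneg x
  simpa [dotProduct, Matrix.mulVec, Finset.mul_sum, mul_assoc] using H

private lemma diag_nonneg' {n : Type*} [Fintype n] [DecidableEq n] {M : Matrix n n ℝ}
    (h : M.PosSemidef) (A : n) : 0 ≤ M A A := by
  have H := quadform_nonneg h (fun I => if I = A then 1 else 0)
  simpa [ite_mul, mul_ite, Finset.sum_ite_eq', Finset.mem_univ] using H

private lemma offdiag_zero {n : Type*} [Fintype n] [DecidableEq n] {M : Matrix n n ℝ}
    (h : M.PosSemidef) {A B : n} (hsym : M A B = M B A) (hA : M A A = 0) : M A B = 0 := by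
  rcases eq_or_ne A B with rfl | hne
  · exact hA
  · have key : ∀ c : ℝ, 0 ≤ 2 * c * M A B + M B B := by
      intro c
      have H := quadform_nonneg h (fun I => (if I = A then c else 0) + (if I = B then 1 else 0))
      simp only [add_mul, mul_add, ite_mul, mul_ite, mul_zero, zero_mul, mul_one, one_mul,
        zero_add, add_zero, Finset.sum_add_distrib, Finset.sum_ite_eq', Finset.mem_univ,
        if_true] at H
      rw [hA, ← hsym] at H
      linarith [H]
    by_contra hne2
    have hc := key ((-(M B B) - 1) / (2 * M A B))
    have he : 2 * ((-(M B B) - 1) / (2 * M A B)) * M A B = -(M B B) - 1 := by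
      field_simp
    rw [he] at hc
    linarith

private lemma sum_sign_vanish {V : Type*} [DecidableEq V] [Fintype V]
    (S U : Finset V) (f : Finset V → ℝ) (a : V)
    (ha : a ∈ U) (haS : a ∉ S) (hf : ∀ J, f (insert a J) = f J) :
    ∑ T ∈ Finset.univ.filter (fun T => S ⊆ T ∧ T ⊆ U), (-1:ℝ)^T.card * f T = 0 := by
  refine Finset.sum_involution (fun T _ => if a ∈ T then T.erase a else insert a T)
    ?_ ?_ ?_ ?_
  · intro T hT
    by_cases haT : a ∈ T
    · simp only [if_pos haT]
      have h1 : f T = f (T.erase a) := by rw [← hf (T.erase a), Finset.insert_erase haT]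
      have h2 : T.card = (T.erase a).card + 1 := (Finset.card_erase_add_one haT).symm
      rw [h1, h2, pow_succ]
      ring
    · simp only [if_neg haT]
      rw [← hf T, Finset.card_insert_of_notMem haT, pow_succ]
      ring
  · intro T _ _
    by_cases haT : a ∈ T
    · simp only [if_pos haT]
      intro hE
      exact (hE ▸ Finset.notMem_erase a T) haT
    · simp only [if_neg haT]
      intro hE
      exact haT (hE ▸ Finset.mem_insert_self a T)
  · intro T hT
    simp only [Finset.mem_filter, Finset.mem_univ, true_and] at hT ⊢
    by_cases haT : a ∈ T
    · simp only [if_pos haT]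
      exact ⟨Finset.subset_erase.mpr ⟨hT.1, haS⟩, (Finset.erase_subset a T).trans hT.2⟩
    · simp only [if_neg haT]
      exact ⟨hT.1.trans (Finset.subset_insert a T), Finset.insert_subset ha hT.2⟩
  · intro T hT
    by_cases haT : a ∈ T <;>
      simp [haT, Finset.insert_erase, Finset.erase_insert, Finset.notMem_erase]

section Aux
variable [Fintype V] [DecidableEq V]

open scoped Classical in
/-- `z` restricted to independent sets. -/
noncomputable def zhatD (G : SimpleGraph V) (z : Finset V → ℝ) (W : Finset V) : ℝ :=
  if IsIndep G W then z W else 0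

open scoped Classical in
/-- Möbius-type coefficients of `z` over the family of independent sets. -/
noncomputable def muD (G : SimpleGraph V) (z : Finset V → ℝ) (S : Finset V) : ℝ :=
  if IsIndep G S then
    ∑ J ∈ Finset.univ.filter (fun T => S ⊆ T), (-1 : ℝ) ^ (J.card + S.card) * zhatD G z J
  else 0

omit [Fintype V] [DecidableEq V] in
private lemma indep_mono {G : SimpleGraph V} {A B : Finset V} (hAB : A ⊆ B)
    (hB : IsIndep G B) : IsIndep G A :=
  fun u hu w hw hne => hB u (hAB hu) w (hAB hw) hne

private lemma muD_alt (G : SimpleGraph V) (z : Finset V → ℝ) (T : Finset V) :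
    muD G z T = ∑ J ∈ Finset.univ.filter (fun J => T ⊆ J),
      (-1 : ℝ) ^ (J.card + T.card) * zhatD G z J := by
  classical
  by_cases h : IsIndep G T
  · rw [muD, if_pos h]
  · rw [muD, if_neg h]
    symm
    apply Finset.sum_eq_zero
    intro J hJ
    have hTJ : T ⊆ J := (Finset.mem_filter.mp hJ).2
    have : ¬ IsIndep G J := fun hJi => h (indep_mono hTJ hJi)
    simp [zhatD, this]

private lemma muD_inv (G : SimpleGraph V) (z : Finset V → ℝ) (S : Finset V) :
    ∑ T ∈ Finset.univ.filter (fun T => S ⊆ T), muD G z T = zhatD G z S := by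
  classical
  calc ∑ T ∈ Finset.univ.filter (fun T => S ⊆ T), muD G z T
      = ∑ T ∈ Finset.univ, (if S ⊆ T then
          ∑ J ∈ Finset.univ, (if T ⊆ J then (-1:ℝ)^(J.card+T.card) * zhatD G z J else 0)
          else 0) := by
        rw [Finset.sum_filter]
        refine Finset.sum_congr rfl fun T _ => ?_
        by_cases hST : S ⊆ T
        · rw [if_pos hST, if_pos hST, muD_alt, Finset.sum_filter]
        · rw [if_neg hST, if_neg hST]
    _ = ∑ T ∈ Finset.univ, ∑ J ∈ Finset.univ,
          (if S ⊆ T ∧ T ⊆ J then (-1:ℝ)^(J.card+T.card) * zhatD G z J else 0) := by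
        refine Finset.sum_congr rfl fun T _ => ?_
        by_cases hST : S ⊆ T
        · simp only [if_pos hST]
          refine Finset.sum_congr rfl fun J _ => ?_
          by_cases hTJ : T ⊆ J <;> simp [hST, hTJ]
        · simp [hST]
    _ = ∑ J ∈ Finset.univ, ∑ T ∈ Finset.univ,
          (if S ⊆ T ∧ T ⊆ J then (-1:ℝ)^(J.card+T.card) * zhatD G z J else 0) := Finset.sum_comm
    _ = ∑ J ∈ Finset.univ, ∑ T ∈ Finset.univ.filter (fun T => S ⊆ T ∧ T ⊆ J),
          (-1:ℝ)^T.card * ((-1:ℝ)^J.card * zhatD G z J) := by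
        refine Finset.sum_congr rfl fun J _ => ?_
        rw [Finset.sum_filter]
        refine Finset.sum_congr rfl fun T _ => ?_
        by_cases h : S ⊆ T ∧ T ⊆ J
        · simp only [if_pos h]
          rw [pow_add]; ring
        · simp [h]
    _ = zhatD G z S := ?_
  refine (Finset.sum_eq_single S ?_ ?_).trans ?_
  · intro J _ hne
    by_cases hSJ : S ⊆ J
    · obtain ⟨a, haJ, haS⟩ := Finset.exists_of_ssubset
        (Finset.ssubset_iff_subset_ne.mpr ⟨hSJ, hne.symm⟩)
      exact sum_sign_vanish S J _ a haJ haS (fun _ => rfl)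
    · apply Finset.sum_eq_zero
      intro T hT
      simp only [Finset.mem_filter] at hT
      exact absurd (hT.2.1.trans hT.2.2) hSJ
  · intro h; exact absurd (Finset.mem_univ S) h
  · have hfe : Finset.univ.filter (fun T => S ⊆ T ∧ T ⊆ S) = {S} := by
      ext T
      simp only [Finset.mem_filter, Finset.mem_univ, true_and, Finset.mem_singleton]
      constructor
      · rintro ⟨h1, h2⟩; exact Finset.Subset.antisymm h2 h1
      · rintro rfl; exact ⟨Finset.Subset.refl _, Finset.Subset.refl _⟩
    rw [hfe, Finset.sum_singleton, ← mul_assoc, ← pow_add,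
      Even.neg_one_pow ⟨S.card, rfl⟩, one_mul]

private lemma muD_nonneg (G : SimpleGraph V) (t : ℕ) (z : Finset V → ℝ)
    (hM : Matrix.PosSemidef (Matrix.of fun (I J : {I : Finset V // I.card ≤ t}) => z (I.1 ∪ J.1)))
    (hcard : ∀ s : Finset V, IsIndep G s → s.card ≤ t)
    (hdep : ∀ W : Finset V, W.card ≤ 2 * t → ¬ IsIndep G W → z W = 0)
    (S : Finset V) : 0 ≤ muD G z S := by
  classical
  by_cases hSi : IsIndep G S
  swap
  · rw [muD, if_neg hSi]
  have hzt : ∀ I J : Finset V, IsIndep G I → IsIndep G J →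
      z (I ∪ J) = zhatD G z (I ∪ J) := by
    intro I J hI hJ
    by_cases h : IsIndep G (I ∪ J)
    · rw [zhatD, if_pos h]
    · rw [zhatD, if_neg h, hdep _ ?_ h]
      calc (I ∪ J).card ≤ I.card + J.card := Finset.card_union_le I J
        _ ≤ 2 * t := by have := hcard I hI; have := hcard J hJ; omega
  set g : Finset V → ℝ := fun A => if S ⊆ A ∧ IsIndep G A then (-1:ℝ)^A.card else 0 with hg
  have hg0 : ∀ A : Finset V, ¬ A.card ≤ t → g A = 0 := by
    intro A hA
    simp only [hg]
    exact if_neg (fun h => hA (hcard A h.2))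
  set Ft : Finset (Finset V) := Finset.univ.filter (fun A : Finset V => A.card ≤ t) with hFt
  have hQ := quadform_nonneg hM (fun I : {I : Finset V // I.card ≤ t} => g I.1)
  simp only [Matrix.of_apply] at hQ
  have e1 : (∑ I : {I : Finset V // I.card ≤ t}, ∑ J : {I : Finset V // I.card ≤ t},
      g I.1 * z (I.1 ∪ J.1) * g J.1)
      = ∑ A ∈ Ft, ∑ B ∈ Ft, g A * z (A ∪ B) * g B := by
    calc (∑ I : {I : Finset V // I.card ≤ t}, ∑ J : {I : Finset V // I.card ≤ t},
        g I.1 * z (I.1 ∪ J.1) * g J.1)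
        = ∑ I : {I : Finset V // I.card ≤ t}, ∑ B ∈ Ft, g I.1 * z (I.1 ∪ B) * g B :=
          Finset.sum_congr rfl fun I _ =>
            (Finset.sum_subtype (p := fun A : Finset V => A.card ≤ t) Ft
              (fun A => by simp [hFt]) (fun B => g I.1 * z (I.1 ∪ B) * g B)).symm
      _ = ∑ A ∈ Ft, ∑ B ∈ Ft, g A * z (A ∪ B) * g B :=
          (Finset.sum_subtype (p := fun A : Finset V => A.card ≤ t) Ft
            (fun A => by simp [hFt]) (fun A => ∑ B ∈ Ft, g A * z (A ∪ B) * g B)).symm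
  have e2 : (∑ A ∈ Ft, ∑ B ∈ Ft, g A * z (A ∪ B) * g B)
      = ∑ A ∈ Finset.univ, ∑ B ∈ Finset.univ, g A * z (A ∪ B) * g B := by
    calc (∑ A ∈ Ft, ∑ B ∈ Ft, g A * z (A ∪ B) * g B)
        = ∑ A ∈ Ft, ∑ B ∈ Finset.univ, g A * z (A ∪ B) * g B := by
          refine Finset.sum_congr rfl fun A _ => ?_
          refine Finset.sum_subset (Finset.subset_univ Ft) fun B _ hB => ?_
          rw [hg0 B (by simpa [hFt] using hB), mul_zero]
      _ = ∑ A ∈ Finset.univ, ∑ B ∈ Finset.univ, g A * z (A ∪ B) * g B := by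
          refine Finset.sum_subset (Finset.subset_univ Ft) fun A _ hA => ?_
          apply Finset.sum_eq_zero
          intro B _
          rw [hg0 A (by simpa [hFt] using hA), zero_mul, zero_mul]
  have hterm : ∀ A B : Finset V, g A * z (A ∪ B) * g B =
      (if S ⊆ A then (if S ⊆ B then
        (-1:ℝ)^A.card * ((-1:ℝ)^B.card * zhatD G z (A ∪ B)) else 0) else 0) := by
    intro A B
    by_cases hSA : S ⊆ A
    · by_cases hSB : S ⊆ B
      · by_cases hIA : IsIndep G A
        · by_cases hIB : IsIndep G B
          · have := hzt A B hIA hIB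
            simp only [hg, hSA, hSB, hIA, hIB, and_self, if_true, this]
            ring
          · have hd : ¬ IsIndep G (A ∪ B) :=
              fun h => hIB (indep_mono Finset.subset_union_right h)
            simp [hg, hSA, hSB, hIB, zhatD, hd]
        · have hd : ¬ IsIndep G (A ∪ B) :=
            fun h => hIA (indep_mono Finset.subset_union_left h)
          simp [hg, hSA, hIA, zhatD, hd]
      · simp [hg, hSB]
    · simp [hg, hSA]
  have e3 : (∑ A ∈ Finset.univ, ∑ B ∈ Finset.univ, g A * z (A ∪ B) * g B)
      = ∑ A ∈ Finset.univ.filter (fun T : Finset V => S ⊆ T), (-1:ℝ)^A.card *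
          ∑ B ∈ Finset.univ.filter (fun T : Finset V => S ⊆ T),
            (-1:ℝ)^B.card * zhatD G z (A ∪ B) := by
    calc (∑ A ∈ Finset.univ, ∑ B ∈ Finset.univ, g A * z (A ∪ B) * g B)
        = ∑ A ∈ Finset.univ, (if S ⊆ A then ∑ B ∈ Finset.univ, (if S ⊆ B then
            (-1:ℝ)^A.card * ((-1:ℝ)^B.card * zhatD G z (A ∪ B)) else 0) else 0) := by
          refine Finset.sum_congr rfl fun A _ => ?_
          rw [Finset.sum_congr rfl fun B _ => hterm A B]
          by_cases hSA : S ⊆ A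
          · simp only [if_pos hSA]
          · simp only [if_neg hSA, Finset.sum_const_zero]
      _ = ∑ A ∈ Finset.univ.filter (fun T : Finset V => S ⊆ T),
            ∑ B ∈ Finset.univ, (if S ⊆ B then
            (-1:ℝ)^A.card * ((-1:ℝ)^B.card * zhatD G z (A ∪ B)) else 0) :=
          (Finset.sum_filter _ _).symm
      _ = ∑ A ∈ Finset.univ.filter (fun T : Finset V => S ⊆ T), (-1:ℝ)^A.card *
            ∑ B ∈ Finset.univ.filter (fun T : Finset V => S ⊆ T),
              (-1:ℝ)^B.card * zhatD G z (A ∪ B) := by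
          refine Finset.sum_congr rfl fun A _ => ?_
          rw [Finset.mul_sum, Finset.sum_filter]
  have hPall : Finset.univ.filter (fun T : Finset V => S ⊆ T ∧ T ⊆ Finset.univ)
      = Finset.univ.filter (fun T : Finset V => S ⊆ T) := by
    apply Finset.filter_congr
    intro T _
    simp [Finset.subset_univ]
  have e4 : (∑ A ∈ Finset.univ.filter (fun T : Finset V => S ⊆ T), (-1:ℝ)^A.card *
          ∑ B ∈ Finset.univ.filter (fun T : Finset V => S ⊆ T),
            (-1:ℝ)^B.card * zhatD G z (A ∪ B))
      = (-1:ℝ)^S.card * ∑ B ∈ Finset.univ.filter (fun T : Finset V => S ⊆ T),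
          (-1:ℝ)^B.card * zhatD G z B := by
    refine (Finset.sum_eq_single_of_mem S (by simp) ?_).trans ?_
    · intro A hA hne
      have hSA : S ⊆ A := by simpa using hA
      obtain ⟨a, haA, haS⟩ := Finset.exists_of_ssubset
        (Finset.ssubset_iff_subset_ne.mpr ⟨hSA, hne.symm⟩)
      have hf : ∀ J : Finset V, zhatD G z (A ∪ insert a J) = zhatD G z (A ∪ J) := by
        intro J
        congr 1
        rw [Finset.union_insert, Finset.insert_eq_self.mpr (Finset.mem_union_left _ haA)]
      have hv := sum_sign_vanish S Finset.univ (fun B => zhatD G z (A ∪ B)) a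
        (Finset.mem_univ a) haS hf
      rw [hPall] at hv
      rw [hv, mul_zero]
    · congr 1
      refine Finset.sum_congr rfl fun B hB => ?_
      have hSB : S ⊆ B := by simpa using hB
      rw [Finset.union_eq_right.mpr hSB]
  have e5 : muD G z S = (-1:ℝ)^S.card * ∑ B ∈ Finset.univ.filter (fun T : Finset V => S ⊆ T),
      (-1:ℝ)^B.card * zhatD G z B := by
    rw [muD, if_pos hSi, Finset.mul_sum]
    refine Finset.sum_congr rfl fun B _ => ?_
    rw [pow_add]
    ring
  rw [e1, e2, e3, e4, ← e5] at hQ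
  exact hQ

end Aux

/-- Rothvoss-style exactness: if `t ≥ α(G)` and `z ∈ SoS_t(K_G)`, then the
projection of `z` onto singleton coordinates is a convex combination of indicator
vectors of independent sets of `G`; in particular, for any nonnegative weights, the
SoS objective is at most the maximum weight of an independent set. -/
theorem sos_exact_of_indepNum_le [Fintype V] [DecidableEq V]
    (G : SimpleGraph V) (t : ℕ) (z : Finset V → ℝ)
    (hz : InSoS G t z) (ht : indepNum G ≤ t) :
    (∃ μ : Finset V → ℝ, (∀ s, 0 ≤ μ s) ∧ (∀ s, μ s ≠ 0 → IsIndep G s) ∧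
      (∑ s : Finset V, μ s = 1) ∧
      ∀ i : V, z {i} = ∑ s : Finset V, μ s * (if i ∈ s then 1 else 0)) ∧
    ∀ w : V → ℝ, (∀ i, 0 ≤ w i) →
      ∃ s : Finset V, IsIndep G s ∧ ∑ i : V, w i * z {i} ≤ ∑ i ∈ s, w i := by
  classical
  obtain ⟨hz1, hM, hEdge⟩ := hz
  have hbdd : BddAbove {n | ∃ s : Finset V, s.card = n ∧ IsIndep G s} := by
    refine ⟨Fintype.card V, ?_⟩
    rintro n ⟨s, rfl, -⟩
    exact s.card_le_univ
  have hcard : ∀ s : Finset V, IsIndep G s → s.card ≤ t := fun s hs =>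
    le_trans (le_csSup hbdd ⟨s, rfl, hs⟩) ht
  have hempty : IsIndep G ∅ := fun u hu => absurd hu (Finset.notMem_empty u)
  have hsingle : ∀ i : V, IsIndep G {i} := by
    intro i u hu w hw hne
    rw [Finset.mem_singleton] at hu hw
    exact absurd (hu.trans hw.symm) hne
  have hnotindep : ∀ S : Finset V, ¬ IsIndep G S →
      ∃ u ∈ S, ∃ w ∈ S, u ≠ w ∧ G.Adj u w := by
    intro S hS
    by_contra hc
    push_neg at hc
    exact hS (fun u hu w hw hne => hc u hu w hw hne)
  have main : ∃ μ : Finset V → ℝ, (∀ s, 0 ≤ μ s) ∧ (∀ s, μ s ≠ 0 → IsIndep G s) ∧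
      (∑ s : Finset V, μ s = 1) ∧
      ∀ i : V, z {i} = ∑ s : Finset V, μ s * (if i ∈ s then 1 else 0) := by
    rcases Nat.lt_or_ge t 2 with h2 | h2t
    · interval_cases t
      · -- t = 0 : V is empty
        have hV : IsEmpty V := by
          by_contra hne
          rw [not_isEmpty_iff] at hne
          obtain ⟨v⟩ := hne
          have := hcard {v} (hsingle v)
          simp at this
        have huniv : (Finset.univ : Finset (Finset V)) = {∅} :=
          Finset.eq_singleton_iff_unique_mem.mpr
            ⟨Finset.mem_univ _, fun s _ => Finset.eq_empty_of_isEmpty s⟩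
        refine ⟨fun _ => 1, fun s => zero_le_one, fun s _ u hu => (hV.false u).elim, ?_,
          fun i => (hV.false i).elim⟩
        rw [huniv, Finset.sum_singleton]
      · -- t = 1 : G is complete
        have hcomp : ∀ u v : V, u ≠ v → G.Adj u v := by
          intro u v hne
          by_contra hna
          have hind : IsIndep G {u, v} := by
            intro a ha b hb hab
            simp only [Finset.mem_insert, Finset.mem_singleton] at ha hb
            rcases ha with rfl | rfl <;> rcases hb with rfl | rfl
            · exact absurd rfl hab
            · exact hna
            · exact fun h => hna h.symm
            · exact absurd rfl hab
          have hle := hcard _ hind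
          rw [Finset.card_insert_of_notMem (by simp [hne]), Finset.card_singleton] at hle
          omega
        have hdiag1 : ∀ S : Finset V, S.card ≤ 1 → 0 ≤ z S := by
          intro S hS
          have := diag_nonneg' hM (⟨S, hS⟩ : {I : Finset V // I.card ≤ 1})
          simpa [Finset.union_self] using this
        have hzi : ∀ i : V, 0 ≤ z {i} := fun i => hdiag1 {i} (by simp)
        have hzij : ∀ i j : V, i ≠ j → z ({i} ∪ {j}) ≤ 0 := by
          intro i j hne
          have := diag_nonneg' (hEdge i j (hcomp i j hne))
            (⟨{i}, by simp⟩ : {I : Finset V // I.card ≤ 1})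
          simp only [Matrix.of_apply, Finset.union_self] at this
          linarith
        set σ : ℝ := ∑ i : V, z {i} with hσ
        have hinj : ∀ x ∈ (Finset.univ : Finset V), ∀ y ∈ Finset.univ,
            ({x} : Finset V) = {y} → x = y := fun x _ y _ h => Finset.singleton_inj.mp h
        have hnotmem : (∅ : Finset V) ∉ Finset.univ.image (fun i : V => ({i} : Finset V)) := by
          simp
        have hF1e : Finset.univ.filter (fun A : Finset V => A.card ≤ 1)
            = insert ∅ (Finset.univ.image (fun i : V => ({i} : Finset V))) := by
          ext A
          simp only [Finset.mem_filter, Finset.mem_univ, true_and, Finset.mem_insert,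
            Finset.mem_image]
          constructor
          · intro h
            rcases Nat.le_one_iff_eq_zero_or_eq_one.mp h with h0 | h1
            · exact Or.inl (Finset.card_eq_zero.mp h0)
            · obtain ⟨a, rfl⟩ := Finset.card_eq_one.mp h1
              exact Or.inr ⟨a, rfl⟩
          · rintro (rfl | ⟨a, -, rfl⟩) <;> simp
        have hsplit : ∀ h : Finset V → ℝ,
            ∑ A ∈ Finset.univ.filter (fun A : Finset V => A.card ≤ 1), h A
              = h ∅ + ∑ i : V, h {i} := by
          intro h
          rw [hF1e, Finset.sum_insert hnotmem, Finset.sum_image hinj]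
        have key : ∀ c : ℝ, 0 ≤ c^2 + 2*c*σ + σ := by
          intro c
          set g1 : Finset V → ℝ := fun A => if A = ∅ then c else 1 with hg1
          have hQ := quadform_nonneg hM (fun I : {I : Finset V // I.card ≤ 1} => g1 I.1)
          simp only [Matrix.of_apply] at hQ
          have e1 : (∑ I : {I : Finset V // I.card ≤ 1}, ∑ J : {I : Finset V // I.card ≤ 1},
              g1 I.1 * z (I.1 ∪ J.1) * g1 J.1)
              = ∑ A ∈ Finset.univ.filter (fun A : Finset V => A.card ≤ 1),
                  ∑ B ∈ Finset.univ.filter (fun A : Finset V => A.card ≤ 1),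
                    g1 A * z (A ∪ B) * g1 B := by
            calc (∑ I : {I : Finset V // I.card ≤ 1}, ∑ J : {I : Finset V // I.card ≤ 1},
                g1 I.1 * z (I.1 ∪ J.1) * g1 J.1)
                = ∑ I : {I : Finset V // I.card ≤ 1},
                    ∑ B ∈ Finset.univ.filter (fun A : Finset V => A.card ≤ 1),
                      g1 I.1 * z (I.1 ∪ B) * g1 B :=
                  Finset.sum_congr rfl fun I _ =>
                    (Finset.sum_subtype (p := fun A : Finset V => A.card ≤ 1) _
                      (fun A => by simp) (fun B => g1 I.1 * z (I.1 ∪ B) * g1 B)).symm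
              _ = _ :=
                  (Finset.sum_subtype (p := fun A : Finset V => A.card ≤ 1) _
                    (fun A => by simp)
                    (fun A => ∑ B ∈ Finset.univ.filter (fun A : Finset V => A.card ≤ 1),
                      g1 A * z (A ∪ B) * g1 B)).symm
          have e2 : (∑ A ∈ Finset.univ.filter (fun A : Finset V => A.card ≤ 1),
              ∑ B ∈ Finset.univ.filter (fun A : Finset V => A.card ≤ 1),
                g1 A * z (A ∪ B) * g1 B)
              = c * c + c * σ + (σ * c + ∑ i : V, ∑ j : V, z ({i} ∪ {j})) := by
            rw [hsplit]
            simp only [hsplit]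
            simp only [hg1, Finset.singleton_ne_empty, if_neg, if_pos, eq_self_iff_true,
              if_true]
            simp only [ite_false, Finset.empty_union, Finset.union_empty, hz1, mul_one, one_mul]
            rw [Finset.sum_add_distrib, ← Finset.mul_sum, ← Finset.sum_mul, hσ]
          rw [e1, e2] at hQ
          have hD : (∑ i : V, ∑ j : V, z ({i} ∪ {j})) ≤ σ := by
            rw [hσ]
            apply Finset.sum_le_sum
            intro i _
            have hsplitj : ∑ j : V, z ({i} ∪ {j})
                = z ({i} ∪ {i}) + ∑ j ∈ Finset.univ.erase i, z ({i} ∪ {j}) :=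
              (Finset.add_sum_erase _ _ (Finset.mem_univ i)).symm
            rw [hsplitj, Finset.union_self]
            have hnp : ∑ j ∈ Finset.univ.erase i, z ({i} ∪ {j}) ≤ 0 :=
              Finset.sum_nonpos fun j hj => hzij i j (Finset.ne_of_mem_erase hj).symm
            linarith
          nlinarith [hQ, hD]
        have hσ0 : 0 ≤ σ := Finset.sum_nonneg fun i _ => hzi i
        have hσ1 : σ ≤ 1 := by
          have hk := key (-σ)
          nlinarith [hk, hσ0]
        refine ⟨fun S => if S = ∅ then 1 - σ else if S.card = 1 then z S else 0,
          ?_, ?_, ?_, ?_⟩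
        · intro s
          by_cases h0 : s = ∅
          · simp [h0]
            linarith
          · by_cases h1 : s.card = 1
            · obtain ⟨a, rfl⟩ := Finset.card_eq_one.mp h1
              simp only [if_neg h0, Finset.card_singleton, if_pos rfl]
              exact hzi a
            · simp [h0, h1]
        · intro s hs
          by_cases h0 : s = ∅
          · subst h0; exact hempty
          · by_cases h1 : s.card = 1
            · obtain ⟨a, rfl⟩ := Finset.card_eq_one.mp h1
              exact hsingle a
            · simp [h0, h1] at hs
        · rw [← Finset.add_sum_erase _ _ (Finset.mem_univ (∅ : Finset V))]
          simp only [eq_self_iff_true, if_true]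
          have he : ∑ s ∈ Finset.univ.erase (∅ : Finset V),
              (if s = ∅ then 1 - σ else if s.card = 1 then z s else 0) = σ := by
            calc ∑ s ∈ Finset.univ.erase (∅ : Finset V),
                (if s = ∅ then 1 - σ else if s.card = 1 then z s else 0)
                = ∑ s ∈ Finset.univ.erase (∅ : Finset V),
                    (if s.card = 1 then z s else 0) :=
                  Finset.sum_congr rfl fun s hs => by
                    rw [if_neg (Finset.ne_of_mem_erase hs)]
              _ = ∑ s ∈ (Finset.univ.erase (∅ : Finset V)).filter (fun s => s.card = 1),
                    z s := (Finset.sum_filter _ _).symm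
              _ = ∑ s ∈ Finset.univ.image (fun i : V => ({i} : Finset V)), z s := by
                  congr 1
                  ext s
                  simp only [Finset.mem_filter, Finset.mem_erase, Finset.mem_univ, true_and,
                    and_true, Finset.mem_image]
                  constructor
                  · rintro ⟨hne, h1⟩
                    obtain ⟨a, rfl⟩ := Finset.card_eq_one.mp h1
                    exact ⟨a, rfl⟩
                  · rintro ⟨a, -, rfl⟩
                    exact ⟨Finset.singleton_ne_empty a, Finset.card_singleton a⟩
              _ = ∑ i : V, z {i} := Finset.sum_image hinj
              _ = σ := hσ.symm
          rw [he]
          ring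
        · intro i
          refine Eq.symm ((Finset.sum_eq_single ({i} : Finset V) ?_ ?_).trans ?_)
          · intro b _ hbne
            by_cases hib : i ∈ b
            · by_cases h0 : b = ∅
              · subst h0; simp at hib
              · by_cases h1 : b.card = 1
                · obtain ⟨a, rfl⟩ := Finset.card_eq_one.mp h1
                  rw [Finset.mem_singleton] at hib
                  exact absurd (by rw [hib]) hbne
                · simp [h0, h1]
            · simp [hib]
          · intro h
            exact absurd (Finset.mem_univ _) h
          · simp [Finset.singleton_ne_empty]
    · -- t ≥ 2 : the Möbius coefficients work
      have hdiag : ∀ S : Finset V, S.card ≤ t → 0 ≤ z S := by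
        intro S hS
        have := diag_nonneg' hM (⟨S, hS⟩ : {I : Finset V // I.card ≤ t})
        simpa [Finset.union_self] using this
      have hEdiag : ∀ (i j : V), G.Adj i j → ∀ S : Finset V, S.card ≤ t →
          0 ≤ z S - z (S ∪ {i}) - z (S ∪ {j}) := by
        intro i j hij S hS
        have := diag_nonneg' (hEdge i j hij) (⟨S, hS⟩ : {I : Finset V // I.card ≤ t})
        simpa [Finset.union_self] using this
      have hdep0 : ∀ S : Finset V, S.card ≤ t → ¬ IsIndep G S → z S = 0 := by
        intro S hS hni
        obtain ⟨u, hu, w, hw, hne, hadj⟩ := hnotindep S hni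
        have h1 := hEdiag u w hadj S hS
        rw [Finset.union_eq_left.mpr (Finset.singleton_subset_iff.mpr hu),
            Finset.union_eq_left.mpr (Finset.singleton_subset_iff.mpr hw)] at h1
        have h2 := hdiag S hS
        linarith
      have hdep2 : ∀ W : Finset V, W.card ≤ 2 * t → ¬ IsIndep G W → z W = 0 := by
        intro W hW hni
        obtain ⟨u, hu, w, hw, hne, hadj⟩ := hnotindep W hni
        have huw : ({u, w} : Finset V) ⊆ W := by
          intro x hx
          rcases Finset.mem_insert.mp hx with rfl | hx
          · exact hu
          · exact (Finset.mem_singleton.mp hx) ▸ hw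
        have hcuw : ({u, w} : Finset V).card = 2 := by
          rw [Finset.card_insert_of_notMem (by simp [hne]), Finset.card_singleton]
        have h2W : 2 ≤ W.card := hcuw ▸ Finset.card_le_card huw
        obtain ⟨A, hA1, hA2, hA3⟩ := Finset.exists_subsuperset_card_eq huw
          (by rw [hcuw]; exact le_max_left _ _) (max_le h2W (Nat.sub_le _ _))
        have hWt : W.card - t ≤ t := by omega
        have hAt : A.card ≤ t := by rw [hA3]; exact max_le h2t hWt
        have hge : W.card - t ≤ A.card := hA3 ▸ le_max_right _ _
        have hBt : (W \ A).card ≤ t := by rw [Finset.card_sdiff_of_subset hA2]; omega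
        have hAni : ¬ IsIndep G A := fun hind =>
          hind u (hA1 (Finset.mem_insert_self u {w})) w (hA1 (by simp)) hne hadj
        have hzA : z A = 0 := hdep0 A hAt hAni
        have hoff := offdiag_zero hM (A := ⟨A, hAt⟩) (B := ⟨W \ A, hBt⟩)
          (show z (A ∪ (W \ A)) = z ((W \ A) ∪ A) from congrArg z (Finset.union_comm _ _))
          (show z (A ∪ A) = 0 by rw [Finset.union_self]; exact hzA)
        rw [← Finset.union_sdiff_of_subset hA2]
        exact hoff
      refine ⟨muD G z, muD_nonneg G t z hM hcard hdep2, ?_, ?_, ?_⟩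
      · intro s hs
        by_contra h
        exact hs (by rw [muD, if_neg h])
      · have hi := muD_inv G z ∅
        rw [Finset.filter_true_of_mem (fun s _ => Finset.empty_subset s)] at hi
        rw [hi]
        simp [zhatD, hempty, hz1]
      · intro i
        have hi := muD_inv G z {i}
        have he : ∑ s : Finset V, muD G z s * (if i ∈ s then 1 else 0)
            = ∑ T ∈ Finset.univ.filter (fun T => ({i} : Finset V) ⊆ T), muD G z T := by
          rw [Finset.sum_filter]
          refine Finset.sum_congr rfl fun s _ => ?_
          by_cases h : i ∈ s <;> simp [h, Finset.singleton_subset_iff]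
        rw [he, hi]
        simp [zhatD, hsingle i]
  refine ⟨main, ?_⟩
  obtain ⟨μ, hp, hsupp, h1, hsing⟩ := main
  intro w hw
  obtain ⟨S', hS'mem, hS'max⟩ := Finset.exists_max_image
    (Finset.univ.filter (fun s => IsIndep G s)) (fun s => ∑ i ∈ s, w i)
    ⟨∅, by simp [hempty]⟩
  simp only [Finset.mem_filter] at hS'mem
  refine ⟨S', hS'mem.2, ?_⟩
  calc ∑ i : V, w i * z {i}
      = ∑ i : V, ∑ s : Finset V, w i * (μ s * (if i ∈ s then 1 else 0)) := by
        refine Finset.sum_congr rfl fun i _ => ?_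
        rw [hsing i, Finset.mul_sum]
    _ = ∑ s : Finset V, ∑ i : V, w i * (μ s * (if i ∈ s then 1 else 0)) := Finset.sum_comm
    _ = ∑ s : Finset V, μ s * ∑ i ∈ s, w i := by
        refine Finset.sum_congr rfl fun s _ => ?_
        have hterm : ∀ i : V, w i * (μ s * (if i ∈ s then 1 else 0)) =
            if i ∈ s then μ s * w i else 0 := by
          intro i
          by_cases h : i ∈ s <;> simp [h] <;> ring
        rw [Finset.sum_congr rfl fun i _ => hterm i, Finset.sum_ite_mem,
          Finset.univ_inter, Finset.mul_sum]
    _ ≤ ∑ s : Finset V, μ s * ∑ i ∈ S', w i := by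
        apply Finset.sum_le_sum
        intro s _
        by_cases h0 : μ s = 0
        · simp [h0]
        · exact mul_le_mul_of_nonneg_left
            (hS'max s (Finset.mem_filter.mpr ⟨Finset.mem_univ s, hsupp s h0⟩)) (hp s)
    _ = ∑ i ∈ S', w i := by rw [← Finset.sum_mul, h1, one_mul]
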